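/- Every symmetric matrix A indexed by a finite set V with |V| ≥ 2 has a critical element or a proper strongly homogeneous set. -/

import Mathlib

/-- The consecutive pairs of `l` avoid `z` with respect to the matrix `A`. -/
def AvoidChain {V : Type*} (A : V → V → ℝ) (z : V) (l : List V) : Prop :=
  l.Chain' fun u w => min (A u z) (A w z) < A u w

/-- `l` is a path from `x` to `y` avoiding `z` in `A`: a sequence of distinct
elements starting at `x`, ending at `y`, each consecutive pair avoiding `z`. -/
def AvoidPath {V : Type*} (A : V → V → ℝ) (z x y : V) (l : List V) : Prop :=
  l.Nodup ∧ l.head? = some x ∧ l.getLast? = some y ∧ AvoidChain A z l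

/-- `x ~^z y`: there is a path from `x` to `y` avoiding `z` in `A`. -/
def Avoids {V : Type*} (A : V → V → ℝ) (z x y : V) : Prop :=
  ∃ l, AvoidPath A z x y l

/-- `{x,y,z}` is a weighted asteroidal triple of `A`. -/
def IsWAT {V : Type*} (A : V → V → ℝ) (x y z : V) : Prop :=
  x ≠ y ∧ y ≠ z ∧ x ≠ z ∧ Avoids A z x y ∧ Avoids A x y z ∧ Avoids A y z x

/-- `π` is a Robinson ordering of `A`. -/
def IsRobinsonOrdering {V : Type*} [Fintype V] (A : V → V → ℝ)
    (π : Fin (Fintype.card V) ≃ V) : Prop :=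
  ∀ i j k : Fin (Fintype.card V), i < j → j < k →
    A (π i) (π k) ≤ min (A (π i) (π j)) (A (π j) (π k))

/-- `A` is Robinsonian: it admits a Robinson ordering. -/
def Robinsonian {V : Type*} [Fintype V] (A : V → V → ℝ) : Prop :=
  ∃ π : Fin (Fintype.card V) ≃ V, IsRobinsonOrdering A π

/-- `S` is strongly homogeneous for `A`. -/
def StronglyHomogeneous {V : Type*} [DecidableEq V] (A : V → V → ℝ) (S : Finset V) : Prop :=
  ∀ x ∉ S, ∀ y ∈ S, ∀ z ∈ S, A x y = A x z ∧ A x y ≤ A y z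

/-- `a` is critical for `A`: between any two distinct elements of `V \ {a}`
there is a path avoiding `a`. -/
def IsCritical {V : Type*} (A : V → V → ℝ) (a : V) : Prop :=
  ∀ x y : V, x ≠ a → y ≠ a → x ≠ y → Avoids A a x y

/-- The similarity layers of `A` rooted at `a`, together with the union of the
layers so far: `(simLayersAux A a n).1` is the `n`-th layer `X_n` and
`(simLayersAux A a n).2 = X_0 ∪ ⋯ ∪ X_n`. -/
def simLayersAux {V : Type*} (A : V → V → ℝ) (a : V) : ℕ → Set V × Set V
  | 0 => ({a}, {a})
  | n + 1 =>
    let U := (simLayersAux A a n).2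
    let L := { y | y ∉ U ∧ ∀ x ∈ U, ∀ z ∉ U, A x z ≤ A x y }
    (L, U ∪ L)

/-- The `n`-th similarity layer `X_n` of `A` rooted at `a`. -/
def simLayer {V : Type*} (A : V → V → ℝ) (a : V) (n : ℕ) : Set V :=
  (simLayersAux A a n).1

def EdgeRel {V : Type*} (A : V → V → ℝ) (y u w : V) : Prop :=
  u ≠ w ∧ min (A u y) (A w y) < A u w

lemma edgeRel_symm {V : Type*} {A : V → V → ℝ} (hsym : ∀ u v : V, A u v = A v u) {y : V} :
    Symmetric (EdgeRel A y) := by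
  intro u w ⟨hne, hlt⟩
  exact ⟨hne.symm, by rwa [min_comm, hsym w u]⟩

lemma avoids_of_rtg {V : Type*} {A : V → V → ℝ} {z x y : V}
    (h : Relation.ReflTransGen (EdgeRel A z) x y) : Avoids A z x y := by
  induction h with
  | refl => exact ⟨[x], List.nodup_singleton x, rfl, rfl, List.isChain_singleton x⟩
  | @tail b c hxb hbc ih =>
    obtain ⟨l, hnd, hhd, hlast, hch⟩ := ih
    by_cases hc : c ∈ l
    · obtain ⟨s, t, rfl⟩ := List.append_of_mem hc
      have hpre : (s ++ [c]) <+: (s ++ c :: t) := ⟨t, by simp⟩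
      refine ⟨s ++ [c], hnd.sublist hpre.sublist, ?_, ?_, hch.prefix hpre⟩
      · cases s with
        | nil => simpa using hhd
        | cons a s' => simpa using hhd
      · simp [List.getLast?_concat]
    · have hlne : l ≠ [] := by rintro rfl; simp at hhd
      refine ⟨l ++ [c], ?_, ?_, ?_, ?_⟩
      · simp [List.nodup_append, hnd, hc]
        intro a ha h; exact hc (h ▸ ha)
      · cases l with
        | nil => simp at hhd
        | cons a l' => simpa using hhd
      · simp [List.getLast?_concat]
      · refine List.isChain_append.mpr ⟨hch, List.isChain_singleton c, ?_⟩
        intro p hp q hq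
        simp only [List.head?_cons, Option.mem_def, Option.some.injEq] at hq
        rw [hlast] at hp
        simp only [Option.mem_def, Option.some.injEq] at hp
        subst hp; subst hq
        exact hbc.2

lemma rtg_symm {V : Type*} {r : V → V → Prop} (hs : Symmetric r) {a b : V}
    (h : Relation.ReflTransGen r a b) : Relation.ReflTransGen r b a := by
  induction h with
  | refl => exact .refl
  | tail _ e ih => exact Relation.ReflTransGen.head (hs e) ih


section S
variable {V : Type*} [DecidableEq V] (A : V → V → ℝ)

/-- Auxiliary refinement recursion. -/
lemma lemS_aux (hsym : ∀ u v : V, A u v = A v u) (W : Finset V) (p : V) :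
    ∀ (n : ℕ) (U pend T : Finset V),
      pend.card + T.card ≤ n →
      p ∈ U → (U ∪ pend) ∪ T = W →
      Disjoint U pend → Disjoint U T → Disjoint pend T →
      T.Nonempty →
      (∀ x ∈ U, ∀ t ∈ T, ∀ t' ∈ T, A x t = A x t') →
      (∀ t ∈ T, ∀ u ∈ U, Relation.ReflTransGen (EdgeRel A t) u p) →
      (∀ z ∈ pend, ∃ x ∈ U, ∀ t ∈ T, A x t < A x z) →
      (∀ t ∈ T, ∀ z ∈ W, z ≠ p → A p t ≤ A p z) →
      ∃ U' T' : Finset V, p ∈ U' ∧ U' ∪ T' = W ∧ Disjoint U' T' ∧ T'.Nonempty ∧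
        (∀ x ∈ U', ∀ t ∈ T', ∀ t' ∈ T', A x t = A x t') ∧
        (∀ t ∈ T', ∀ u ∈ U', Relation.ReflTransGen (EdgeRel A t) u p) ∧
        (∀ t ∈ T', ∀ z ∈ W, z ≠ p → A p t ≤ A p z) := by
  intro n
  induction n with
  | zero =>
    intro U pend T hcard _ _ _ _ _ hT _ _ _ _
    exfalso
    have := Finset.card_pos.mpr hT
    omega
  | succ n ih =>
    intro U pend T hcard hp hun hUp hUT hpT hT hmod hconn hcert hmin
    rcases eq_or_ne pend ∅ with rfl | hpend
    · exact ⟨U, T, hp, by simpa using hun, hUT, hT, hmod, hconn, hmin⟩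
    · obtain ⟨z, hz⟩ := Finset.nonempty_iff_ne_empty.mpr hpend
      obtain ⟨tm, htm, htmmin⟩ := T.exists_min_image (fun t => A z t) hT
      set T2 := T.filter (fun t => A z t = A z tm) with hT2def
      set toss := T.filter (fun t => ¬ A z t = A z tm) with htossdef
      have hT2T : T2 ⊆ T := Finset.filter_subset _ _
      have htossT : toss ⊆ T := Finset.filter_subset _ _
      have htmT2 : tm ∈ T2 := Finset.mem_filter.mpr ⟨htm, rfl⟩
      obtain ⟨x0, hx0U, hx0⟩ := hcert z hz
      -- new state
      have hzU : z ∉ U := Finset.disjoint_left.mp hUp.symm hz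
      have hzT : z ∉ T := Finset.disjoint_left.mp hpT hz
      refine ih (insert z U) ((pend.erase z) ∪ toss) T2 ?_ (Finset.mem_insert_of_mem hp) ?_ ?_ ?_ ?_
        ⟨tm, htmT2⟩ ?_ ?_ ?_ ?_
      · -- cardinality
        have h1 : T2.card + toss.card = T.card := by
          rw [hT2def, htossdef]; exact Finset.card_filter_add_card_filter_not _
        have h2 : ((pend.erase z) ∪ toss).card ≤ (pend.erase z).card + toss.card :=
          Finset.card_union_le _ _
        have h3 : (pend.erase z).card = pend.card - 1 := Finset.card_erase_of_mem hz
        have h4 : 1 ≤ pend.card := Finset.card_pos.mpr ⟨z, hz⟩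
        omega
      · -- union = W
        rw [← hun]
        ext u
        simp only [Finset.mem_union, Finset.mem_insert, Finset.mem_erase, hT2def, htossdef,
          Finset.mem_filter]
        by_cases huz : u = z
        · subst huz; tauto
        · by_cases hq : A z u = A z tm <;> tauto
      · -- Disjoint (insert z U) (pend.erase z ∪ toss)
        refine Finset.disjoint_left.mpr ?_
        intro u hu hu'
        rcases Finset.mem_insert.mp hu with rfl | hu
        · rcases Finset.mem_union.mp hu' with h | h
          · exact (Finset.mem_erase.mp h).1 rfl
          · exact hzT (htossT h)
        · rcases Finset.mem_union.mp hu' with h | h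
          · exact Finset.disjoint_left.mp hUp hu (Finset.mem_of_mem_erase h)
          · exact Finset.disjoint_left.mp hUT hu (htossT h)
      · -- Disjoint (insert z U) T2
        refine Finset.disjoint_left.mpr ?_
        intro u hu hu'
        rcases Finset.mem_insert.mp hu with rfl | hu
        · exact hzT (hT2T hu')
        · exact Finset.disjoint_left.mp hUT hu (hT2T hu')
      · -- Disjoint (pend.erase z ∪ toss) T2
        refine Finset.disjoint_left.mpr ?_
        intro u hu hu'
        rcases Finset.mem_union.mp hu with hu | hu
        · exact Finset.disjoint_left.mp hpT (Finset.mem_of_mem_erase hu) (hT2T hu')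
        · exact (Finset.mem_filter.mp hu).2 (Finset.mem_filter.mp hu').2
      · -- module
        intro x hx t ht t' ht'
        rcases Finset.mem_insert.mp hx with rfl | hx
        · rw [(Finset.mem_filter.mp ht).2, (Finset.mem_filter.mp ht').2]
        · exact hmod x hx t (hT2T ht) t' (hT2T ht')
      · -- conn
        intro t ht u hu
        rcases Finset.mem_insert.mp hu with rfl | hu
        · refine Relation.ReflTransGen.head ?_ (hconn t (hT2T ht) x0 hx0U)
          refine ⟨fun h => hzU (h ▸ hx0U), ?_⟩
          calc min (A u t) (A x0 t) ≤ A x0 t := min_le_right _ _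
            _ < A x0 u := hx0 t (hT2T ht)
            _ = A u x0 := hsym x0 u
        · exact hconn t (hT2T ht) u hu
      · -- pend certs
        intro w hw
        rcases Finset.mem_union.mp hw with hw | hw
        · obtain ⟨x, hxU, hxlt⟩ := hcert w (Finset.mem_of_mem_erase hw)
          exact ⟨x, Finset.mem_insert_of_mem hxU, fun t ht => hxlt t (hT2T ht)⟩
        · refine ⟨z, Finset.mem_insert_self z U, fun t ht => ?_⟩
          have h1 : A z t = A z tm := (Finset.mem_filter.mp ht).2
          have h2 : ¬ A z w = A z tm := (Finset.mem_filter.mp hw).2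
          have h3 : A z tm ≤ A z w := htmmin w (htossT hw)
          rw [h1]
          exact lt_of_le_of_ne h3 (fun h => h2 h.symm)
      · -- p-min
        intro t ht z' hz' hz'p
        exact hmin t (hT2T ht) z' hz' hz'p

lemma lemS (hsym : ∀ u v : V, A u v = A v u) (W : Finset V) (p : V) (hp : p ∈ W)
    (hW : (W.erase p).Nonempty) :
    ∃ U T : Finset V, p ∈ U ∧ U ∪ T = W ∧ Disjoint U T ∧ T.Nonempty ∧
      (∀ x ∈ U, ∀ t ∈ T, ∀ t' ∈ T, A x t = A x t') ∧
      (∀ t ∈ T, ∀ u ∈ U, Relation.ReflTransGen (EdgeRel A t) u p) ∧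
      (∀ t ∈ T, ∀ z ∈ W, z ≠ p → A p t ≤ A p z) := by
  obtain ⟨tm, htm, htmmin⟩ := (W.erase p).exists_min_image (fun t => A p t) hW
  set T := (W.erase p).filter (fun t => A p t = A p tm) with hTdef
  set pend := (W.erase p).filter (fun t => ¬ A p t = A p tm) with hpenddef
  have hTsub : T ⊆ W.erase p := Finset.filter_subset _ _
  have hpendsub : pend ⊆ W.erase p := Finset.filter_subset _ _
  refine lemS_aux A hsym W p (pend.card + T.card) {p} pend T le_rfl (Finset.mem_singleton_self p)
    ?_ ?_ ?_ ?_ ⟨tm, Finset.mem_filter.mpr ⟨htm, rfl⟩⟩ ?_ ?_ ?_ ?_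
  · ext u
    simp only [Finset.mem_union, Finset.mem_singleton, hTdef, hpenddef, Finset.mem_filter,
      Finset.mem_erase]
    by_cases hup : u = p
    · subst hup; tauto
    · by_cases hq : A p u = A p tm <;> tauto
  · exact Finset.disjoint_singleton_left.mpr (fun h => (Finset.mem_erase.mp (hpendsub h)).1 rfl)
  · exact Finset.disjoint_singleton_left.mpr (fun h => (Finset.mem_erase.mp (hTsub h)).1 rfl)
  · refine Finset.disjoint_left.mpr (fun u hu hu' => ?_)
    exact (Finset.mem_filter.mp hu).2 (Finset.mem_filter.mp hu').2
  · intro x hx t ht t' ht'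
    rw [Finset.mem_singleton.mp hx, (Finset.mem_filter.mp ht).2, (Finset.mem_filter.mp ht').2]
  · intro t _ u hu
    rw [Finset.mem_singleton.mp hu]
  · intro z hz
    refine ⟨p, Finset.mem_singleton_self p, fun t ht => ?_⟩
    have h1 : A p t = A p tm := (Finset.mem_filter.mp ht).2
    have h2 : ¬ A p z = A p tm := (Finset.mem_filter.mp hz).2
    have h3 : A p tm ≤ A p z := htmmin z (hpendsub hz)
    rw [h1]; exact lt_of_le_of_ne h3 (fun h => h2 h.symm)
  · intro t ht z hz hzp
    rw [(Finset.mem_filter.mp ht).2]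
    exact htmmin z (Finset.mem_erase.mpr ⟨hzp, hz⟩)
end S

section Core
variable {V : Type*} [DecidableEq V] (A : V → V → ℝ)

lemma core (hsym : ∀ u v : V, A u v = A v u) :
    ∀ W : Finset V, W.Nonempty → ∀ c : ℝ,
      (∃ S : Finset V, S ⊆ W ∧ 2 ≤ S.card ∧
        (∀ x ∈ W, x ∉ S → ∀ s ∈ S, ∀ s' ∈ S, A x s = A x s' ∧ A x s ≤ A s s') ∧
        (∀ s ∈ S, ∀ s' ∈ S, c ≤ A s s')) ∨
      (∃ y ∈ W, ∀ u ∈ W, u ≠ y →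
        ∃ h ∈ W, Relation.ReflTransGen (EdgeRel A y) u h ∧ A h y < c) := by
  intro W
  induction W using Finset.strongInductionOn with
  | _ W ih =>
  intro hW c
  by_cases hcard1 : W.card = 1
  · obtain ⟨y, rfl⟩ := Finset.card_eq_one.mp hcard1
    refine Or.inr ⟨y, Finset.mem_singleton_self y, ?_⟩
    intro u hu hune
    exact absurd (Finset.mem_singleton.mp hu) hune
  by_cases hall : ∀ u ∈ W, ∀ w ∈ W, c ≤ A u w
  · refine Or.inl ⟨W, subset_rfl, ?_, ?_, hall⟩
    · have := Finset.card_pos.mpr hW; omega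
    · intro x hx hx'; exact absurd hx hx'
  · push_neg at hall
    obtain ⟨u0, hu0, w0, hw0, hlt⟩ := hall
    by_cases hoff : ∃ p ∈ W, ∃ q ∈ W, p ≠ q ∧ A p q < c
    · obtain ⟨p, hp, q, hq, hpq, hpqc⟩ := hoff
      have hWp : (W.erase p).Nonempty := ⟨q, Finset.mem_erase.mpr ⟨hpq.symm, hq⟩⟩
      obtain ⟨U, T, hpU, hUT, hdisj, hTne, hmod, hconn, hmin⟩ := lemS A hsym W p hp hWp
      have hTW : T ⊆ W := by rw [← hUT]; exact Finset.subset_union_right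
      have hUW : U ⊆ W := by rw [← hUT]; exact Finset.subset_union_left
      have hpT : p ∉ T := Finset.disjoint_left.mp hdisj hpU
      have hApT : ∀ t ∈ T, A p t < c := fun t ht =>
        lt_of_le_of_lt (hmin t ht q hq hpq.symm) hpqc
      have hmemUT : ∀ u ∈ W, u ∈ U ∨ u ∈ T := by
        intro u hu
        exact Finset.mem_union.mp (by rw [hUT]; exact hu)
      by_cases hT1 : T.card = 1
      · obtain ⟨y, rfl⟩ := Finset.card_eq_one.mp hT1
        have hyT : y ∈ ({y} : Finset V) := Finset.mem_singleton_self y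
        refine Or.inr ⟨y, hTW hyT, ?_⟩
        intro u hu huy
        have huU : u ∈ U := by
          rcases hmemUT u hu with h | h
          · exact h
          · exact absurd (Finset.mem_singleton.mp h) huy
        exact ⟨p, hp, hconn y hyT u huU, hApT y hyT⟩
      · obtain ⟨t0, ht0⟩ := hTne
        obtain ⟨xs, hxsU, hxsmax⟩ := U.exists_max_image (fun x => A x t0) ⟨p, hpU⟩
        have hTssW : T ⊂ W := (Finset.ssubset_iff_of_subset hTW).mpr ⟨p, hp, hpT⟩
        rcases ih T hTssW ⟨t0, ht0⟩ (max c (A xs t0)) with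
          ⟨S, hST, hS2, hSmod, hSfloor⟩ | ⟨y, hyT, hG2⟩
        · refine Or.inl ⟨S, hST.trans hTW, hS2, ?_, ?_⟩
          · intro x hx hxS s hs s' hs'
            rcases hmemUT x hx with hxU | hxT
            · refine ⟨hmod x hxU s (hST hs) s' (hST hs'), ?_⟩
              calc A x s = A x t0 := hmod x hxU s (hST hs) t0 ht0
                _ ≤ A xs t0 := hxsmax x hxU
                _ ≤ max c (A xs t0) := le_max_right _ _
                _ ≤ A s s' := hSfloor s hs s' hs'
            · exact hSmod x hxT hxS s hs s' hs'
          · intro s hs s' hs'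
            exact le_trans (le_max_left _ _) (hSfloor s hs s' hs')
        · refine Or.inr ⟨y, hTW hyT, ?_⟩
          intro u hu huy
          rcases hmemUT u hu with hxU | hxT
          · exact ⟨p, hp, hconn y hyT u hxU, hApT y hyT⟩
          · obtain ⟨h', hh'T, hrtg, hh'c2⟩ := hG2 u hxT huy
            by_cases hh'c : A h' y < c
            · exact ⟨h', hTW hh'T, hrtg, hh'c⟩
            · have hh'cs : A h' y < A xs t0 := by
                rcases lt_max_iff.mp hh'c2 with h | h
                · exact absurd h hh'c
                · exact h
              have hxsT : xs ∉ T := Finset.disjoint_left.mp hdisj hxsU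
              have hedge : EdgeRel A y h' xs := by
                refine ⟨fun hEq => hxsT (hEq ▸ hh'T), ?_⟩
                have h1 : A xs y = A xs t0 := hmod xs hxsU y hyT t0 ht0
                have h2 : A h' xs = A xs t0 := by
                  rw [hsym h' xs]; exact hmod xs hxsU h' hh'T t0 ht0
                rw [h2, h1]
                calc min (A h' y) (A xs t0) ≤ A h' y := min_le_left _ _
                  _ < A xs t0 := hh'cs
              exact ⟨p, hp, (hrtg.tail hedge).trans (hconn y hyT xs hxsU), hApT y hyT⟩
    · push_neg at hoff
      have hdiag : A u0 u0 < c := by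
        rcases eq_or_ne u0 w0 with rfl | hne
        · exact hlt
        · exact absurd hlt (not_lt.mpr (hoff u0 hu0 w0 hw0 hne))
      refine Or.inr ⟨u0, hu0, ?_⟩
      intro u hu hune
      refine ⟨u0, hu0, Relation.ReflTransGen.single ⟨hune, ?_⟩, hdiag⟩
      calc min (A u u0) (A u0 u0) ≤ A u0 u0 := min_le_right _ _
        _ < c := hdiag
        _ ≤ A u u0 := hoff u hu u0 hu0 hune

end Core

theorem stmt_6 {V : Type*} [Fintype V] [DecidableEq V] (A : V → V → ℝ)
    (hsym : ∀ u v : V, A u v = A v u)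
    (hV : 2 ≤ Fintype.card V) :
    (∃ a : V, IsCritical A a) ∨
    (∃ S : Finset V, 2 ≤ S.card ∧ S.card ≤ Fintype.card V - 1 ∧
      StronglyHomogeneous A S) := by
  have hne : Nonempty V := Fintype.card_pos_iff.mp (by omega)
  obtain ⟨p⟩ := hne
  have hp : p ∈ (Finset.univ : Finset V) := Finset.mem_univ p
  have hWp : ((Finset.univ : Finset V).erase p).Nonempty := by
    rw [← Finset.card_pos, Finset.card_erase_of_mem hp, Finset.card_univ]
    omega
  obtain ⟨U, T, hpU, hUT, hdisj, hTne, hmod, hconn, hmin⟩ :=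
    lemS A hsym Finset.univ p hp hWp
  have hmemUT : ∀ u : V, u ∈ U ∨ u ∈ T := fun u =>
    Finset.mem_union.mp (by rw [hUT]; exact Finset.mem_univ u)
  have hpT : p ∉ T := Finset.disjoint_left.mp hdisj hpU
  by_cases hT1 : T.card = 1
  · obtain ⟨y, rfl⟩ := Finset.card_eq_one.mp hT1
    have hyT : y ∈ ({y} : Finset V) := Finset.mem_singleton_self y
    left
    refine ⟨y, ?_⟩
    intro x z hx hz hxz
    have hxU : x ∈ U := by
      rcases hmemUT x with h | h
      · exact h
      · exact absurd (Finset.mem_singleton.mp h) hx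
    have hzU : z ∈ U := by
      rcases hmemUT z with h | h
      · exact h
      · exact absurd (Finset.mem_singleton.mp h) hz
    exact avoids_of_rtg ((hconn y hyT x hxU).trans
      (rtg_symm (edgeRel_symm hsym) (hconn y hyT z hzU)))
  · obtain ⟨t0, ht0⟩ := hTne
    obtain ⟨xs, hxsU, hxsmax⟩ := U.exists_max_image (fun x => A x t0) ⟨p, hpU⟩
    rcases core A hsym T ⟨t0, ht0⟩ (A xs t0) with
      ⟨S, hST, hS2, hSmod, hSfloor⟩ | ⟨y, hyT, hG2⟩
    · right
      refine ⟨S, hS2, ?_, ?_⟩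
      · have hSsub : S ⊆ Finset.univ.erase p := fun s hs =>
          Finset.mem_erase.mpr ⟨fun h => hpT (h ▸ hST hs), Finset.mem_univ s⟩
        have := Finset.card_le_card hSsub
        rwa [Finset.card_erase_of_mem (Finset.mem_univ p), Finset.card_univ] at this
      · intro x hx y hy z hz
        rcases hmemUT x with hxU | hxT
        · refine ⟨hmod x hxU y (hST hy) z (hST hz), ?_⟩
          calc A x y = A x t0 := hmod x hxU y (hST hy) t0 ht0
            _ ≤ A xs t0 := hxsmax x hxU
            _ ≤ A y z := hSfloor y hy z hz
        · exact hSmod x hxT hx y hy z hz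
    · left
      refine ⟨y, ?_⟩
      have hreach : ∀ u : V, u ≠ y → Relation.ReflTransGen (EdgeRel A y) u p := by
        intro u huy
        rcases hmemUT u with hxU | hxT
        · exact hconn y hyT u hxU
        · obtain ⟨h', hh'T, hrtg, hh'c⟩ := hG2 u hxT huy
          have hxsT : xs ∉ T := Finset.disjoint_left.mp hdisj hxsU
          have hedge : EdgeRel A y h' xs := by
            refine ⟨fun hEq => hxsT (hEq ▸ hh'T), ?_⟩
            have h1 : A xs y = A xs t0 := hmod xs hxsU y hyT t0 ht0
            have h2 : A h' xs = A xs t0 := by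
              rw [hsym h' xs]; exact hmod xs hxsU h' hh'T t0 ht0
            rw [h2, h1]
            calc min (A h' y) (A xs t0) ≤ A h' y := min_le_left _ _
              _ < A xs t0 := hh'c
          exact (hrtg.tail hedge).trans (hconn y hyT xs hxsU)
      intro x z hx hz hxz
      exact avoids_of_rtg ((hreach x hx).trans
        (rtg_symm (edgeRel_symm hsym) (hreach z hz)))
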